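/- Let F be a presheaf of sets on a topological space X. For sections s ∈ F(U), t ∈ F(V) (over open sets U, V), define M(s,t) ⊆ X as the union of all open sets W ⊆ U ∩ V such that s|_W = t|_W. Then: (i) U ⊆ M(s,s) for s ∈ F(U); (ii) M(s,t) = M(t,s); (iii) M(s,t) ∩ M(t,u) ⊆ M(s,u) for any three sections s,t,u. Hence the set of all sections of F, typed by their domains, forms a symmetric category enriched in the quantaloid of open subsets of X. -/
import Mathlib


open CategoryTheory TopologicalSpace Opposite

/-- The "local equality" of two sections `s, t` of a presheaf: the union of all opens
`W` contained in both domains on which the restrictions of `s` and `t` agree. -/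
def locEq {X : Type*} [TopologicalSpace X] (F : (Opens X)ᵒᵖ ⥤ Type*)
    (s t : Σ U : Opens X, F.obj (op U)) : Opens X :=
  sSup {W | ∃ (h1 : W ≤ s.1) (h2 : W ≤ t.1),
    F.map (homOfLE h1).op s.2 = F.map (homOfLE h2).op t.2}

theorem stmt_11 {X : Type*} [TopologicalSpace X] (F : (Opens X)ᵒᵖ ⥤ Type*) :
    (∀ s : Σ U : Opens X, F.obj (op U), s.1 ≤ locEq F s s) ∧
    (∀ s t : Σ U : Opens X, F.obj (op U), locEq F s t = locEq F t s) ∧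
    (∀ s t u : Σ U : Opens X, F.obj (op U),
      locEq F s t ⊓ locEq F t u ≤ locEq F s u) := by
  refine ⟨fun s => ?_, fun s t => ?_, fun s t u => ?_⟩
  · exact le_sSup ⟨le_rfl, le_rfl, rfl⟩
  · unfold locEq
    congr 1
    ext W
    constructor
    · rintro ⟨h1, h2, h⟩; exact ⟨h2, h1, h.symm⟩
    · rintro ⟨h1, h2, h⟩; exact ⟨h2, h1, h.symm⟩
  · intro x hx
    obtain ⟨hx1, hx2⟩ := hx
    simp only [locEq, SetLike.mem_coe, Opens.mem_sSup] at hx1 hx2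
    obtain ⟨W1, ⟨h1, h2, he1⟩, hxW1⟩ := hx1
    obtain ⟨W2, ⟨h3, h4, he2⟩, hxW2⟩ := hx2
    simp only [locEq, SetLike.mem_coe, Opens.mem_sSup]
    refine ⟨W1 ⊓ W2, ⟨le_trans inf_le_left h1, le_trans inf_le_right h4, ?_⟩,
      hxW1, hxW2⟩
    have e1 : F.map (homOfLE (le_trans inf_le_left h1)).op s.2 =
        F.map (homOfLE (inf_le_left : W1 ⊓ W2 ≤ W1)).op (F.map (homOfLE h1).op s.2) := by
      rw [← FunctorToTypes.map_comp_apply]; rfl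
    have e2 : F.map (homOfLE (le_trans inf_le_right h4)).op u.2 =
        F.map (homOfLE (inf_le_right : W1 ⊓ W2 ≤ W2)).op (F.map (homOfLE h4).op u.2) := by
      rw [← FunctorToTypes.map_comp_apply]; rfl
    rw [e1, e2, he1, ← he2, ← FunctorToTypes.map_comp_apply,
      ← FunctorToTypes.map_comp_apply]
    rfl
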